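/- The number of connected components of the meander whose upper arch configuration is {(1,2n)} ∪ {(2,3),(4,5),…,(2n−2,2n−1)} and whose lower arch configuration is the rainbow matching {(1,2n),(2,2n−1),…,(n,n+1)} equals 1 + ⌊n/2⌋, for n ≥ 2. -/

import Mathlib

/-- A Dyck path of size `n`: a list of booleans (`true` = north step, `false` = east step)
from `(0,0)` to `(n,n)` staying weakly above the diagonal `y = x`. -/
def IsDyckPath (n : ℕ) (w : List Bool) : Prop :=
  w.length = 2 * n ∧ w.count true = n ∧
    ∀ k, (w.take k).count false ≤ (w.take k).count true

/-- The `y`-coordinate of the lattice point reached after `k` steps. -/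
def ycoord (w : List Bool) (k : ℕ) : ℕ := (w.take k).count true

/-- The `x`-coordinate of the lattice point reached after `k` steps. -/
def xcoord (w : List Bool) (k : ℕ) : ℕ := (w.take k).count false

/-- A peak: a north step at position `i` followed by an east step. -/
def IsPeak (w : List Bool) (i : ℕ) : Prop := w[i]? = some true ∧ w[i+1]? = some false

/-- A valley: an east step at position `i` followed by a north step. -/
def IsValley (w : List Bool) (i : ℕ) : Prop := w[i]? = some false ∧ w[i+1]? = some true

/-- Height above the diagonal after `k` steps. -/
def pdepth (w : List Bool) (k : ℕ) : ℤ := (ycoord w k : ℤ) - (xcoord w k : ℤ)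

/-- Step `i` (a north step) of `w` is matched with step `j` (an east step):
the facing east step at the same height (balanced-parentheses matching). -/
def Matches (w : List Bool) (i j : ℕ) : Prop :=
  i < j ∧ w[i]? = some true ∧ w[j]? = some false ∧
    pdepth w (j + 1) = pdepth w i ∧ ∀ k, i < k → k ≤ j → pdepth w i < pdepth w k

/-- The graph on `m` points whose edges are the upper arches and the lower arches;
its connected components are the components of the corresponding meander. -/
def meanderGraph (m : ℕ) (upper lower : ℕ → ℕ → Prop) : SimpleGraph (Fin m) where
  Adj i j := i ≠ j ∧ (upper i.1 j.1 ∨ upper j.1 i.1 ∨ lower i.1 j.1 ∨ lower j.1 i.1)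
  symm := by
    constructor
    intro i j h
    exact ⟨h.1.symm, by tauto⟩
  loopless := by
    constructor
    intro i h
    exact h.1 rfl

/-- The number of components of the meander with the matching of `P` above and the
matching of `Q` below. -/
noncomputable def trajPQ (n : ℕ) (P Q : List Bool) : ℕ :=
  Nat.card (meanderGraph (2 * n) (Matches P) (Matches Q)).ConnectedComponent

/-- The number of components of the meander with the matching of `P` above and the
rainbow matching `i ↦ 2n - 1 - i` below. -/
noncomputable def traj (n : ℕ) (P : List Bool) : ℕ :=
  Nat.card (meanderGraph (2 * n) (Matches P)
    (fun i j => i + j + 1 = 2 * n)).ConnectedComponent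

/-- No peak with even `y`-coordinate and no valley with odd `x`-coordinate. -/
def NoBadCorner (w : List Bool) : Prop :=
  (∀ i, IsPeak w i → Odd (ycoord w (i + 1))) ∧
  (∀ i, IsValley w i → Even (xcoord w (i + 1)))

/-- A bad corner: a peak with even `y`-coordinate or a valley with odd `x`-coordinate. -/
def IsBadCorner (w : List Bool) (i : ℕ) : Prop :=
  (IsPeak w i ∧ Even (ycoord w (i + 1))) ∨ (IsValley w i ∧ Odd (xcoord w (i + 1)))

/-- Interchange the two steps of the corner at positions `i`, `i+1`. -/
def swapCorner (w : List Bool) (i : ℕ) : List Bool :=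
  (w.set i (w.getD (i + 1) true)).set (i + 1) (w.getD i true)

open Classical in
/-- The involution `φ`: swap the two steps of the first bad corner, if any. -/
noncomputable def phiMap (w : List Bool) : List Bool :=
  if h : ∃ i, IsBadCorner w i then swapCorner w (Nat.find h) else w

/-- The number of unit squares between a Dyck path and the diagonal `y = x`. -/
def area (w : List Bool) : ℕ :=
  ((List.range w.length).map fun i =>
    if w.getD i true then 0 else ycoord w i - xcoord w i - 1).sum

/-- The zigzag Dyck path `(NE)^m`. -/
def zigzag (m : ℕ) : List Bool := (List.replicate m [true, false]).flatten

/-- `N^{2a_1} E^{2b_1} ⋯ N^{2a_t} E^{2b_t}` for `ab = [(a_1,b_1),…,(a_t,b_t)]`. -/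
def doubledWord (ab : List (ℕ × ℕ)) : List Bool :=
  (ab.map fun p => List.replicate (2 * p.1) true ++ List.replicate (2 * p.2) false).flatten

/-- `N^{a_1} E^{b_1} ⋯ N^{a_t} E^{b_t}` for `ab = [(a_1,b_1),…,(a_t,b_t)]`. -/
def halfWord (ab : List (ℕ × ℕ)) : List Bool :=
  (ab.map fun p => List.replicate p.1 true ++ List.replicate p.2 false).flatten

/-- All peaks at odd height (`height` = `y - x` at the peak's lattice point). -/
def AllPeaksOdd (w : List Bool) : Prop :=
  ∀ i, IsPeak w i → Odd (ycoord w (i + 1) - xcoord w (i + 1))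

/-- All peaks at even height. -/
def AllPeaksEven (w : List Bool) : Prop :=
  ∀ i, IsPeak w i → Even (ycoord w (i + 1) - xcoord w (i + 1))

/-- Steps of a Motzkin path: up, horizontal, down. -/
inductive MStep | U | H | D
deriving DecidableEq

/-- The total height change along a list of Motzkin steps. -/
def msum (l : List MStep) : ℤ :=
  (l.map fun s => match s with | MStep.U => 1 | MStep.H => 0 | MStep.D => -1).sum

/-- A Motzkin path of length `n`. -/
def IsMotzkin (n : ℕ) (l : List MStep) : Prop :=
  l.length = n ∧ msum l = 0 ∧ ∀ k, 0 ≤ msum (l.take k)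

/-- A Riordan path of length `n`: a Motzkin path with no horizontal step on the `x`-axis. -/
def IsRiordan (n : ℕ) (l : List MStep) : Prop :=
  IsMotzkin n l ∧ ∀ i, l[i]? = some MStep.H → msum (l.take i) ≠ 0

/-- The map `φ_A` from Dyck paths of size `n+1` (all peaks at odd height)
to Motzkin paths of length `n`: `v_j` is read off from steps `p_{2j} p_{2j+1}`. -/
def phiA (n : ℕ) (P : List Bool) : List MStep :=
  (List.range n).map fun j =>
    match P.getD (2 * j + 1) true, P.getD (2 * j + 2) true with
    | true, true => MStep.U
    | false, true => MStep.H
    | _, _ => MStep.D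

/-- The map `φ_B` from Dyck paths of size `n` (all peaks at even height)
to Riordan paths of length `n`: `u_j` is read off from steps `p_{2j-1} p_{2j}`. -/
def phiB (n : ℕ) (P : List Bool) : List MStep :=
  (List.range n).map fun j =>
    match P.getD (2 * j) true, P.getD (2 * j + 1) true with
    | true, true => MStep.U
    | false, true => MStep.H
    | _, _ => MStep.D
/-- The meander whose upper arches are `{(1,2n)} ∪ {(2,3),(4,5),…,(2n-2,2n-1)}` and whose
lower arches form the rainbow matching has exactly `1 + ⌊n/2⌋` components, for `n ≥ 2`
(points `0`-indexed here). -/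
theorem shifted_zigzag_meander_components (n : ℕ) (hn : 2 ≤ n) :
    Nat.card (meanderGraph (2 * n)
      (fun i j => (i = 0 ∧ j = 2 * n - 1) ∨ (Odd i ∧ j = i + 1 ∧ j + 1 < 2 * n))
      (fun i j => i + j + 1 = 2 * n)).ConnectedComponent = 1 + n / 2 := by
  
  set G := meanderGraph (2 * n)
      (fun i j => (i = 0 ∧ j = 2 * n - 1) ∨ (Odd i ∧ j = i + 1 ∧ j + 1 < 2 * n))
      (fun i j => i + j + 1 = 2 * n) with hG
  have hidx : ∀ v : Fin (2*n), (min v.1 (2*n-1-v.1) + 1)/2 < n/2 + 1 := by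
    intro v; have := v.2; omega
  set f : Fin (2*n) → Fin (n/2+1) := fun v => ⟨(min v.1 (2*n-1-v.1) + 1)/2, hidx v⟩ with hf
  have hadjL : ∀ i j : Fin (2*n), i.1 + j.1 + 1 = 2*n → G.Adj i j := by
    intro i j h
    exact ⟨fun he => by have : i.1 = j.1 := congrArg Fin.val he; omega,
      Or.inr (Or.inr (Or.inl h))⟩
  have hadjU : ∀ i j : Fin (2*n), i.1 % 2 = 1 → j.1 = i.1 + 1 → j.1 + 1 < 2*n → G.Adj i j := by
    intro i j h1 h2 h3
    exact ⟨fun he => by have : i.1 = j.1 := congrArg Fin.val he; omega,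
      Or.inl (Or.inr ⟨Nat.odd_iff.mpr h1, h2, h3⟩)⟩
  have hconst : ∀ i j : Fin (2*n), G.Adj i j → f i = f j := by
    intro i j hadj
    obtain ⟨hne, hc⟩ := hadj
    have hi := i.2; have hj := j.2
    apply Fin.ext
    show (min i.1 (2*n-1-i.1) + 1)/2 = (min j.1 (2*n-1-j.1) + 1)/2
    rcases hc with (⟨h1, h2⟩ | ⟨h1, h2, h3⟩) | (⟨h1, h2⟩ | ⟨h1, h2, h3⟩) | h | h
    · omega
    · have := Nat.odd_iff.mp h1; omega
    · omega
    · have := Nat.odd_iff.mp h1; omega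
    · omega
    · omega
  have hreach : ∀ v : Fin (2*n),
      ∃ r : Fin (2*n), G.Reachable v r ∧
        r.1 = (if (min v.1 (2*n-1-v.1) + 1)/2 = 0 then 0
               else 2 * ((min v.1 (2*n-1-v.1) + 1)/2) - 1) := by
    intro v
    have hv := v.2
    set w := min v.1 (2*n-1-v.1) with hw
    have hwlt : w < 2*n := by omega
    have step1 : G.Reachable v ⟨w, hwlt⟩ := by
      rcases Nat.le_total v.1 (2*n-1-v.1) with h | h
      · have : v = (⟨w, hwlt⟩ : Fin (2*n)) := Fin.ext (by show v.1 = w; omega)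
        rw [← this]
      · exact (hadjL v ⟨w, hwlt⟩ (by show v.1 + w + 1 = 2*n; omega)).reachable
    by_cases hw0 : w % 2 = 0 ∧ w ≠ 0
    · have hwlt' : w - 1 < 2*n := by omega
      refine ⟨⟨w-1, hwlt'⟩, step1.trans ?_, ?_⟩
      · exact ((hadjU ⟨w-1, hwlt'⟩ ⟨w, hwlt⟩ (by show (w-1) % 2 = 1; omega)
          (by show w = (w-1) + 1; omega) (by show w + 1 < 2*n; omega)).symm).reachable
      · show w - 1 = _
        rw [if_neg (by omega)]; omega
    · refine ⟨⟨w, hwlt⟩, step1, ?_⟩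
      show w = _
      split_ifs with h <;> omega
  have hwalk : ∀ (v w : Fin (2*n)) (p : G.Walk v w), f v = f w := by
    intro v w p
    induction p with
    | nil => rfl
    | cons h _ ih => exact (hconst _ _ h).trans ih
  have hconst' : ∀ (v w : Fin (2*n)) (p : G.Walk v w), p.IsPath → f v = f w :=
    fun v w p _ => hwalk v w p
  have hbij : Function.Bijective (SimpleGraph.ConnectedComponent.lift f hconst') := by
    constructor
    · refine SimpleGraph.ConnectedComponent.ind₂ ?_
      intro i j hfij
      simp only [SimpleGraph.ConnectedComponent.lift_mk] at hfij
      have hval : (min i.1 (2*n-1-i.1) + 1)/2 = (min j.1 (2*n-1-j.1) + 1)/2 :=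
        congrArg Fin.val hfij
      obtain ⟨ri, hri, hri2⟩ := hreach i
      obtain ⟨rj, hrj, hrj2⟩ := hreach j
      have : ri = rj := Fin.ext (by rw [hri2, hrj2, hval])
      exact SimpleGraph.ConnectedComponent.sound (hri.trans (this ▸ hrj.symm))
    · intro m
      have hm := m.2
      refine ⟨G.connectedComponentMk
        ⟨if m.1 = 0 then 0 else 2 * m.1 - 1, by split_ifs <;> omega⟩, ?_⟩
      simp only [SimpleGraph.ConnectedComponent.lift_mk]
      apply Fin.ext
      show (min (if m.1 = 0 then 0 else 2 * m.1 - 1)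
        (2*n-1-(if m.1 = 0 then 0 else 2 * m.1 - 1)) + 1)/2 = m.1
      split_ifs with h <;> omega
  calc Nat.card G.ConnectedComponent = Nat.card (Fin (n/2+1)) :=
        Nat.card_congr (Equiv.ofBijective _ hbij)
    _ = 1 + n/2 := by rw [Nat.card_eq_fintype_card, Fintype.card_fin]; omega
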